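/- If a matroid M admits a partition of its ground set into bases, then M is uniformly dense, i.e., r · |X| ≤ r_M(X) · |S| for every X ⊆ S, where r is the rank of M. -/

import Mathlib

/-- The rank of a set `X` in a matroid `M`: the maximum size of an independent subset
of `X`. -/
noncomputable def mrank {α : Type*} (M : Matroid α) (X : Set α) : ℕ :=
  sSup {n : ℕ | ∃ I ⊆ X, M.Indep I ∧ I.ncard = n}

/-- If the ground set of a matroid partitions into bases, then the matroid is uniformly
dense: `r ⬝ |X| ≤ r_M(X) ⬝ |S|` for all `X ⊆ S`, where `r` is the rank of `M`. -/
theorem partition_into_bases_uniformly_dense {α : Type*} (M : Matroid α)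
    (hfin : M.E.Finite)
    (hpart : ∃ (k : ℕ) (B : Fin k → Set α), (∀ i, M.IsBase (B i)) ∧
      Pairwise (Function.onFun Disjoint B) ∧ (⋃ i, B i) = M.E) :
    ∀ X ⊆ M.E, mrank M M.E * X.ncard ≤ mrank M X * M.E.ncard := by
  classical
  obtain ⟨k, B, hB, hdisj, hU⟩ := hpart
  intro X hX
  have hXfin : X.Finite := hfin.subset hX
  have hBfin : ∀ i, (B i).Finite := fun i => hfin.subset (hB i).subset_ground
  have hXBfin : ∀ i, (X ∩ B i).Finite := fun i => hXfin.inter_of_left _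
  -- every independent set is at most as large as any base
  have hind : ∀ I, M.Indep I → ∀ i, I.ncard ≤ (B i).ncard := by
    intro I hI i
    obtain ⟨B', hB', hIB'⟩ := hI.exists_isBase_superset
    have hB'fin : B'.Finite := hfin.subset hB'.subset_ground
    calc I.ncard ≤ B'.ncard := Set.ncard_le_ncard hIB' hB'fin
      _ = (B i).ncard := hB'.ncard_eq_ncard_of_isBase (hB i)
  -- lower bound for `mrank M X`
  have hbdd : BddAbove {n : ℕ | ∃ I ⊆ X, M.Indep I ∧ I.ncard = n} := by
    refine ⟨X.ncard, ?_⟩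
    rintro n ⟨I, hIX, hI, rfl⟩
    exact Set.ncard_le_ncard hIX hXfin
  have hle : ∀ i, (X ∩ B i).ncard ≤ mrank M X := by
    intro i
    exact le_csSup hbdd ⟨X ∩ B i, Set.inter_subset_left,
      (hB i).indep.subset Set.inter_subset_right, rfl⟩
  -- upper bound for `mrank M M.E`
  have hrank_le : ∀ i, mrank M M.E ≤ (B i).ncard := by
    intro i
    refine csSup_le ⟨0, ∅, Set.empty_subset _, M.empty_indep, by simp⟩ ?_
    rintro n ⟨I, hIE, hI, rfl⟩
    exact hind I hI i
  -- `|X| ≤ ∑ i, |X ∩ B i|`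
  have hXcard : X.ncard ≤ ∑ i, (X ∩ B i).ncard := by
    have hsub : hXfin.toFinset ⊆ Finset.univ.biUnion (fun i => (hXBfin i).toFinset) := by
      intro x hx
      rw [Set.Finite.mem_toFinset] at hx
      have hxE : x ∈ ⋃ i, B i := hU ▸ hX hx
      obtain ⟨i, hi⟩ := Set.mem_iUnion.mp hxE
      exact Finset.mem_biUnion.mpr ⟨i, Finset.mem_univ i,
        (Set.Finite.mem_toFinset _).mpr ⟨hx, hi⟩⟩
    calc X.ncard = hXfin.toFinset.card := Set.ncard_eq_toFinset_card X hXfin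
      _ ≤ (Finset.univ.biUnion (fun i => (hXBfin i).toFinset)).card :=
          Finset.card_le_card hsub
      _ ≤ ∑ i, (hXBfin i).toFinset.card := Finset.card_biUnion_le
      _ = ∑ i, (X ∩ B i).ncard := by
          exact Finset.sum_congr rfl fun i _ => (Set.ncard_eq_toFinset_card _ _).symm
  -- `∑ i, |B i| ≤ |E|`
  have hEcard : ∑ i, (B i).ncard ≤ M.E.ncard := by
    have hdisjF : ∀ i ∈ Finset.univ, ∀ j ∈ Finset.univ, i ≠ j →
        Disjoint ((hBfin i).toFinset) ((hBfin j).toFinset) := by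
      intro i _ j _ hij
      rw [Finset.disjoint_left]
      intro x hxi hxj
      rw [Set.Finite.mem_toFinset] at hxi hxj
      exact (hdisj hij).le_bot ⟨hxi, hxj⟩
    have hsub : Finset.univ.biUnion (fun i => (hBfin i).toFinset) ⊆ hfin.toFinset := by
      intro x hx
      obtain ⟨i, _, hi⟩ := Finset.mem_biUnion.mp hx
      rw [Set.Finite.mem_toFinset] at hi ⊢
      exact hU ▸ Set.mem_iUnion.mpr ⟨i, hi⟩
    calc ∑ i, (B i).ncard = ∑ i, (hBfin i).toFinset.card := by
          exact Finset.sum_congr rfl fun i _ => (Set.ncard_eq_toFinset_card _ _)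
      _ = (Finset.univ.biUnion (fun i => (hBfin i).toFinset)).card :=
          (Finset.card_biUnion hdisjF).symm
      _ ≤ hfin.toFinset.card := Finset.card_le_card hsub
      _ = M.E.ncard := (Set.ncard_eq_toFinset_card _ hfin).symm
  calc mrank M M.E * X.ncard ≤ mrank M M.E * ∑ i, (X ∩ B i).ncard :=
        Nat.mul_le_mul_left _ hXcard
    _ = ∑ i, mrank M M.E * (X ∩ B i).ncard := Finset.mul_sum ..
    _ ≤ ∑ i, (B i).ncard * mrank M X :=
        Finset.sum_le_sum fun i _ => Nat.mul_le_mul (hrank_le i) (hle i)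
    _ = (∑ i, (B i).ncard) * mrank M X := (Finset.sum_mul ..).symm
    _ ≤ M.E.ncard * mrank M X := Nat.mul_le_mul_right _ hEcard
    _ = mrank M X * M.E.ncard := Nat.mul_comm _ _
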